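/- Let e ≥ 2 and let h = (1, 3, h_2, ..., h_{e-1}, h_e) be a symmetric sequence of positive integers (h_i = h_{e-i}). Suppose there exists a symmetric-with-respect-to-(e+1)/2 sequence a = (a_1 = 1, a_2, ..., a_e) (i.e. a_i = a_{e+1-i} for 1 ≤ i ≤ e) which is unimodal, such that the sequence Δ defined by Δ_0 = 1, Δ_1 = 2, and Δ_i = h_i - a_i for 2 ≤ i ≤ e is an O-sequence. Then h is unimodal. -/
import Mathlib


/-- `msucc i n` is Macaulay's `n^{<i>}`: from the `i`-binomial expansion
`n = C(n_i,i) + ... + C(n_j,j)` (computed greedily), replace each term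
`C(n_k,k)` by `C(n_k+1,k+1)`.  By convention `msucc i 0 = 0` and `msucc 0 n = 0`. -/
def msucc : ℕ → ℕ → ℕ
  | 0, _ => 0
  | _ + 1, 0 => 0
  | (i + 1), (n + 1) =>
      let m := Nat.findGreatest (fun k => Nat.choose k (i + 1) ≤ n + 1) (n + i + 2)
      Nat.choose (m + 1) (i + 2) + msucc i ((n + 1) - Nat.choose m (i + 1))

/-- An (infinite) O-sequence: starts with 1 and satisfies Macaulay's growth condition. -/
def IsOSeq (h : ℕ → ℕ) : Prop :=
  h 0 = 1 ∧ ∀ d, 1 ≤ d → h (d + 1) ≤ msucc d (h d)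

/-- A finite O-sequence of length `d` (entries of degree `0,…,d`). -/
def FinOSeq (g : ℕ → ℕ) (d : ℕ) : Prop :=
  g 0 = 1 ∧ ∀ k, 1 ≤ k → k + 1 ≤ d → g (k + 1) ≤ msucc k (g k)

/-- First difference of a sequence, with `(Diff h) 0 = 1`. -/
def Diff (h : ℕ → ℕ) : ℕ → ℕ := fun k => if k = 0 then 1 else h k - h (k - 1)

/-- An SI-sequence of socle degree `e`: symmetric and its first half is differentiable. -/
def IsSISeq (h : ℕ → ℕ) (e : ℕ) : Prop :=
  (∀ i ≤ e, h i = h (e - i)) ∧ FinOSeq (Diff h) (e / 2)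

/-- Unimodality of `(h 0, …, h e)`. -/
def Unimodal (h : ℕ → ℕ) (e : ℕ) : Prop :=
  ∃ m ≤ e, (∀ i j, i ≤ j → j ≤ m → h i ≤ h j) ∧ (∀ i j, m ≤ i → i ≤ j → j ≤ e → h j ≤ h i)

lemma msucc_zero (i : ℕ) : msucc i 0 = 0 := by cases i <;> rfl

lemma msucc_succ (i n : ℕ) : msucc (i+1) (n+1) =
    Nat.choose ((Nat.findGreatest (fun k => Nat.choose k (i + 1) ≤ n + 1) (n + i + 2)) + 1) (i + 2)
      + msucc i ((n + 1) - Nat.choose (Nat.findGreatest (fun k => Nat.choose k (i + 1) ≤ n + 1) (n + i + 2)) (i + 1)) := rfl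

lemma fgA (i n : ℕ) (h : n ≤ i) :
    Nat.findGreatest (fun k => Nat.choose k (i+1) ≤ n+1) (n+i+2) = i+1 := by
  rw [Nat.findGreatest_eq_iff]
  refine ⟨by omega, fun _ => by simp, fun j hj hj2 hP => ?_⟩
  have h1 : i+2 ≤ Nat.choose j (i+1) := by
    calc i+2 = Nat.choose (i+2) (i+1) := (Nat.choose_succ_self_right (i+1)).symm
    _ ≤ Nat.choose j (i+1) := Nat.choose_le_choose _ (by omega)
  omega

lemma msucc_of_le : ∀ i n, n ≤ i → msucc i n = n := by
  intro i
  induction i with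
  | zero => intro n h; interval_cases n; rfl
  | succ i ih =>
    intro n h
    cases n with
    | zero => rfl
    | succ n =>
      rw [msucc_succ, fgA i n (by omega)]
      simp [Nat.choose_self, Nat.choose_succ_self_right, ih n (by omega)]; omega

lemma fgB (i : ℕ) :
    Nat.findGreatest (fun k => Nat.choose k (i+1) ≤ i+1+1) (i+1+i+2) = i+2 := by
  rw [Nat.findGreatest_eq_iff]
  refine ⟨by omega, fun _ => by simp [Nat.choose_succ_self_right], fun j hj hj2 hP => ?_⟩
  have h1 : Nat.choose (i+3) (i+1) ≤ Nat.choose j (i+1) := Nat.choose_le_choose _ (by omega)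
  have h2 : Nat.choose (i+3) (i+1) = Nat.choose (i+2) i + Nat.choose (i+2) (i+1) :=
    Nat.choose_succ_succ _ _
  have h3 : 0 < Nat.choose (i+2) i := Nat.choose_pos (by omega)
  rw [Nat.choose_succ_self_right] at h2
  omega

lemma msucc_succ_self (i : ℕ) : msucc (i+1) (i+2) = i+3 := by
  rw [msucc_succ, fgB i]
  simp [Nat.choose_succ_self_right, msucc_zero]


/-- Unimodality step of the elementary proof of Stanley's codimension 3 theorem:
if `h = (1,3,h₂,…,h_e)` is symmetric positive and there is a unimodal sequence
`a = (a₁ = 1, a₂, …, a_e)` symmetric about `(e+1)/2` such that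
`Δ = (1, 2, h₂ - a₂, …, h_e - a_e)` is an O-sequence, then `h` is unimodal. -/
theorem stmt10 (e : ℕ) (he : 2 ≤ e) (h a : ℕ → ℕ)
    (h0 : h 0 = 1) (h1 : h 1 = 3) (hpos : ∀ i ≤ e, 0 < h i)
    (hsym : ∀ i ≤ e, h i = h (e - i))
    (ha1 : a 1 = 1)
    (hasym : ∀ k, 1 ≤ k → k ≤ e → a k = a (e + 1 - k))
    (haun : ∃ m, 1 ≤ m ∧ m ≤ e ∧ (∀ k l, 1 ≤ k → k ≤ l → l ≤ m → a k ≤ a l) ∧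
      (∀ k l, m ≤ k → k ≤ l → l ≤ e → a l ≤ a k))
    (hah : ∀ k, 2 ≤ k → k ≤ e → a k ≤ h k)
    (hΔ : FinOSeq (fun k => if k = 0 then 1 else if k = 1 then 2 else h k - a k) e) :
    Unimodal h e := by
  obtain ⟨ma, hma1, hmae, hainc, hadec⟩ := haun
  set D : ℕ → ℕ := (fun k => if k = 0 then 1 else if k = 1 then 2 else h k - a k) with hDdef
  have aclaim : ∀ i j, 1 ≤ i → i ≤ j → j ≤ e → j ≤ e + 1 - i → a i ≤ a j := by
    intro i j hi hij hje hjm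
    rcases le_or_gt j ma with hc | hc
    · exact hainc i j hi hij hc
    · have h2 := hadec j (e+1-i) (by omega) (by omega) (by omega)
      have h3 := hasym i hi (by omega)
      omega
  have hD1 : D 1 = 2 := by simp [hDdef]
  have hDval : ∀ k, 2 ≤ k → D k = h k - a k := by
    intro k hk
    rw [hDdef]
    simp only
    rw [if_neg (by omega), if_neg (by omega)]
  have hDgrow : ∀ k, 1 ≤ k → k + 1 ≤ e → D (k+1) ≤ msucc k (D k) := hΔ.2
  have hDle : ∀ j, 1 ≤ j → j ≤ e → D j ≤ j + 1 := by
    intro j hj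
    induction j, hj using Nat.le_induction with
    | base => intro _; omega
    | succ j hj ih =>
      intro hje
      have hg := hDgrow j hj (by omega)
      have h2 := ih (by omega)
      rcases Nat.lt_or_ge (D j) (j+1) with hc | hc
      · rw [msucc_of_le j (D j) (by omega)] at hg; omega
      · have hDj : D j = j + 1 := by omega
        rw [hDj] at hg
        cases j with
        | zero => omega
        | succ j' => rw [msucc_succ_self j'] at hg; omega
  have hDmono : ∀ j, 1 ≤ j → D j ≤ j → ∀ l, j ≤ l → l ≤ e → D l ≤ D j ∧ D l ≤ l := by
    intro j hj hDj l hjl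
    induction l, hjl using Nat.le_induction with
    | base => exact fun _ => ⟨le_rfl, hDj⟩
    | succ l hl ih =>
      intro hle
      obtain ⟨i1, i2⟩ := ih (by omega)
      have hg := hDgrow l (by omega) (by omega)
      rw [msucc_of_le l (D l) i2] at hg
      exact ⟨by omega, by omega⟩
  have hha : ∀ k, 1 ≤ k → k ≤ e → h k = D k + a k := by
    intro k hk hke
    by_cases hk1 : k = 1
    · subst hk1; omega
    · have hk2 : 2 ≤ k := by omega
      have hv := hDval k hk2
      have := hah k hk2 hke
      omega
  have step : ∀ k, 1 ≤ k → 2*(k+1) ≤ e + 1 → h k ≤ h (k+1) := by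
    intro k hk hke
    by_contra hcon
    push_neg at hcon
    rcases Nat.lt_or_ge e (2*k+2) with hcase | hcase
    · have hs := hsym k (by omega)
      rw [show e - k = k + 1 by omega] at hs
      omega
    · have hk1e : k + 1 ≤ e := by omega
      have ha1' : a k ≤ a (k+1) := aclaim k (k+1) hk (by omega) (by omega) (by omega)
      have e1 := hha k hk (by omega)
      have e2 := hha (k+1) (by omega) hk1e
      have hDk := hDle k hk (by omega)
      have hDk1 : D (k+1) ≤ k + 1 := by omega
      obtain ⟨m1, m2⟩ := hDmono (k+1) (by omega) hDk1 (e-k-1) (by omega) (by omega)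
      obtain ⟨m3, _⟩ := hDmono (e-k-1) (by omega) m2 (e-k) (by omega) (by omega)
      have ha2 : a (k+1) ≤ a (e-k-1) := aclaim (k+1) (e-k-1) (by omega) (by omega) (by omega) (by omega)
      have ha3 := hasym (k+1) (by omega) hk1e
      rw [show e+1-(k+1) = e-k by omega] at ha3
      have e3 := hha (e-k) (by omega) (by omega)
      have e4 := hha (e-k-1) (by omega) (by omega)
      have s1 := hsym k (by omega)
      have s2 := hsym (k+1) hk1e
      rw [show e - (k+1) = e - k - 1 by omega] at s2
      omega
  have mono : ∀ j, j ≤ (e+1)/2 → ∀ i, i ≤ j → h i ≤ h j := by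
    intro j
    induction j with
    | zero => intro _ i hi; interval_cases i; rfl
    | succ j ih =>
      intro hj i hi
      rcases Nat.lt_or_ge i (j+1) with hc | hc
      · have q1 : h i ≤ h j := ih (by omega) i (by omega)
        have q2 : h j ≤ h (j+1) := by
          rcases Nat.eq_zero_or_pos j with hz | hz
          · subst hz; simp [h0, h1]
          · exact step j hz (by omega)
        omega
      · have : i = j+1 := by omega
        rw [this]
  refine ⟨(e+1)/2, by omega, fun i j hij hj => mono j hj i hij, fun i j hmi hij hje => ?_⟩
  have s1 := hsym i (by omega)
  have s2 := hsym j hje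
  have q := mono (e-i) (by omega) (e-j) (by omega)
  omega
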